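/- For every n ≥ 1, the group W_n = ⟨T_n⟩ contains the copy RiSt_F(C_{(ρ_n,1)} ∪ C_{(ρ_n,2)} ∪ C_{(ρ_n,3)} ∪ C_{(ρ_n,4)}) of Thompson's group F supported on the union of the four copies of the Cantor set above ρ_n. -/

import Mathlib

noncomputable section

/-! ### Generalities: the group of self-homeomorphisms -/

instance homeoGroup {X : Type*} [TopologicalSpace X] : Group (X ≃ₜ X) where
  mul f g := g.trans f
  one := Homeomorph.refl X
  inv := Homeomorph.symm
  mul_assoc a b c := Homeomorph.ext fun _ => rfl
  one_mul a := Homeomorph.ext fun _ => rfl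
  mul_one a := Homeomorph.ext fun _ => rfl
  inv_mul_cancel a := Homeomorph.ext a.symm_apply_apply

/-! ### Homeomorphisms of a product with a discrete factor -/

theorem cont_fibered {X Y Z : Type*} [TopologicalSpace X] [TopologicalSpace Y]
    [DiscreteTopology Y] [TopologicalSpace Z] (f : X → Y → Z) (hf : ∀ y, Continuous (f · y)) :
    Continuous (fun p : X × Y => f p.1 p.2) := by
  rw [continuous_iff_continuousAt]
  rintro ⟨x, y⟩
  have hmem : {p : X × Y | p.2 = y} ∈ nhds (x, y) := by
    have ho : IsOpen {p : X × Y | p.2 = y} := by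
      have h : ({p : X × Y | p.2 = y}) = Prod.snd ⁻¹' {y} := rfl
      rw [h]; exact (isOpen_discrete _).preimage continuous_snd
    exact ho.mem_nhds rfl
  refine ContinuousAt.congr (((hf y).comp continuous_fst).continuousAt) ?_
  filter_upwards [hmem] with p hp
  simp [hp]

/-- The homeomorphism of `X × Y`, `Y` discrete, acting on each fiber `X × {y}`
by the homeomorphism `F y`. -/
def fiberedHomeo {X Y : Type*} [TopologicalSpace X] [TopologicalSpace Y] [DiscreteTopology Y]
    (F : Y → X ≃ₜ X) : (X × Y) ≃ₜ (X × Y) where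
  toEquiv := Equiv.prodCongrLeft fun y => (F y).toEquiv
  continuous_toFun := by
    refine Continuous.prodMk ?_ continuous_snd
    exact cont_fibered (fun x y => F y x) (fun y => (F y).continuous)
  continuous_invFun := by
    refine Continuous.prodMk ?_ continuous_snd
    exact cont_fibered (fun x y => (F y).symm x) (fun y => (F y).symm.continuous)

/-- The homeomorphism of `X × Y`, `Y` discrete, permuting the fibers according to a
permutation of `Y` and acting trivially in the `X`-coordinate. -/
def basePermHomeo {X Y : Type*} [TopologicalSpace X] [TopologicalSpace Y] [DiscreteTopology Y]
    (e : Equiv.Perm Y) : (X × Y) ≃ₜ (X × Y) where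
  toEquiv := Equiv.prodCongr (Equiv.refl X) e
  continuous_toFun :=
    continuous_fst.prodMk (continuous_of_discreteTopology.comp continuous_snd)
  continuous_invFun :=
    continuous_fst.prodMk (continuous_of_discreteTopology.comp continuous_snd)

/-! ### The Cantor set -/

/-- The Cantor set `{0,1}^ℕ`. -/
abbrev Cantor : Type := ℕ → Bool

/-- Prepending a finite word to an element of the Cantor set. -/
def wordAppend (w : List Bool) (ξ : Cantor) : Cantor :=
  fun n => if h : n < w.length then w[n] else ξ (n - w.length)

/-- A dyadic partition set: a finite set of binary words whose cylinders partition
the Cantor set. -/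
def IsDyadicPartition (A : Finset (List Bool)) : Prop :=
  ∀ ξ : Cantor, ∃! w : List Bool, w ∈ A ∧ ∃ ξ' : Cantor, wordAppend w ξ' = ξ

/-- The defining condition for elements of Thompson's group `V`: a homeomorphism of the
Cantor set given by prefix replacement along a bijection of two dyadic partition sets. -/
def IsThompsonVMap (γ : Cantor ≃ₜ Cantor) : Prop :=
  ∃ (A B : Finset (List Bool)) (f : List Bool → List Bool),
    IsDyadicPartition A ∧ IsDyadicPartition B ∧ A.card = B.card ∧ Set.BijOn f A B ∧
    ∀ w ∈ A, ∀ ξ : Cantor, γ (wordAppend w ξ) = wordAppend (f w) ξ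

/-- Thompson's group `V`, as a group of homeomorphisms of the Cantor set. -/
def ThompsonV : Subgroup (Cantor ≃ₜ Cantor) :=
  Subgroup.closure {γ | IsThompsonVMap γ}

theorem cantor_core_continuous (G : ℕ → Bool → Bool → Bool → Bool → Bool → Bool → Bool) :
    Continuous (fun ξ : Cantor =>
      (fun n => G n (ξ 0) (ξ 1) (ξ 2) (ξ (n - 1)) (ξ n) (ξ (n + 1)) : Cantor)) := by
  apply continuous_pi
  intro n
  have h : Continuous (fun ξ : Cantor =>
      ((ξ 0, ξ 1, ξ 2, ξ (n - 1), ξ n, ξ (n + 1)) : Bool × Bool × Bool × Bool × Bool × Bool)) :=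
    (continuous_apply 0).prodMk ((continuous_apply 1).prodMk
      ((continuous_apply 2).prodMk ((continuous_apply (n-1)).prodMk
      ((continuous_apply n).prodMk (continuous_apply (n+1))))))
  exact (continuous_of_discreteTopology
    (f := fun p : Bool × Bool × Bool × Bool × Bool × Bool =>
      G n p.1 p.2.1 p.2.2.1 p.2.2.2.1 p.2.2.2.2.1 p.2.2.2.2.2)).comp h

def consC (b : Bool) (ξ : Cantor) : Cantor := fun n => match n with
  | 0 => b
  | n+1 => ξ n

def shiftC (ξ : Cantor) : Cantor := fun n => ξ (n + 1)

theorem consC_continuous (b : Bool) : Continuous (consC b) := by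
  apply continuous_pi
  intro n
  match n with
  | 0 => exact continuous_const
  | n+1 => exact continuous_apply n

theorem shiftC_continuous : Continuous shiftC :=
  continuous_pi fun n => continuous_apply (n + 1)

/-! ### Thompson's generator `X₀` as a homeomorphism of the Cantor set -/

def x0core (n : ℕ) (b0 b1 : Bool) (w v u : Bool) : Bool :=
  if b0 = false then
    (if b1 = false then u
     else if n = 0 then true else if n = 1 then false else v)
  else (if n ≤ 1 then true else w)

def x0invcore (n : ℕ) (b0 b1 : Bool) (w v u : Bool) : Bool :=
  if b0 = false then (if n ≤ 1 then false else w)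
  else if b1 = false then (if n = 0 then false else if n = 1 then true else v)
  else (if n = 0 then true else u)

/-- `X₀ : 00ξ ↦ 0ξ`, `01ξ ↦ 10ξ`, `1ξ ↦ 11ξ`. -/
def x0fun (ξ : Cantor) : Cantor := fun n => x0core n (ξ 0) (ξ 1) (ξ (n - 1)) (ξ n) (ξ (n + 1))

def x0inv (ξ : Cantor) : Cantor := fun n => x0invcore n (ξ 0) (ξ 1) (ξ (n - 1)) (ξ n) (ξ (n + 1))

theorem x0_left_inv : Function.LeftInverse x0inv x0fun := by
  intro ξ
  funext n
  rcases hb0 : ξ 0 with _ | _ <;> rcases hb1 : ξ 1 with _ | _ <;>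
    rcases n with _ | _ | n <;>
    simp [x0fun, x0inv, x0core, x0invcore, hb0, hb1]

theorem x0_right_inv : Function.RightInverse x0inv x0fun := by
  intro ξ
  funext n
  rcases hb0 : ξ 0 with _ | _ <;> rcases hb1 : ξ 1 with _ | _ <;>
    rcases n with _ | _ | n <;>
    simp [x0fun, x0inv, x0core, x0invcore, hb0, hb1]

/-- Thompson's generator `X₀` as a homeomorphism of the Cantor set. -/
def X0c : Cantor ≃ₜ Cantor where
  toEquiv := ⟨x0fun, x0inv, x0_left_inv, x0_right_inv⟩
  continuous_toFun := cantor_core_continuous fun n b0 b1 _ w v u => x0core n b0 b1 w v u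
  continuous_invFun := cantor_core_continuous fun n b0 b1 _ w v u => x0invcore n b0 b1 w v u

/-- The homeomorphism `Cantor ≃ₜ Cantor × Bool` splitting off the first letter. -/
def splitHomeo : Cantor ≃ₜ Cantor × Bool where
  toEquiv := ⟨fun ξ => (shiftC ξ, ξ 0), fun p => consC p.2 p.1,
    fun ξ => by funext n; rcases n with _ | n <;> rfl,
    fun p => by
      refine Prod.ext ?_ rfl
      funext n; rfl⟩
  continuous_toFun := shiftC_continuous.prodMk (continuous_apply 0)
  continuous_invFun := by
    apply continuous_pi
    intro n
    match n with
    | 0 => exact continuous_snd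
    | n+1 => exact (continuous_apply n).comp continuous_fst

/-- Thompson's generator `X₁ = 1X₀`: the copy of `X₀` supported on the cylinder `1C`. -/
def X1c : Cantor ≃ₜ Cantor :=
  splitHomeo.trans ((fiberedHomeo fun b =>
    if b = true then X0c else Homeomorph.refl Cantor).trans splitHomeo.symm)

end

noncomputable section

/-! ### The Grigorchuk generators -/

namespace Grig

def aFun : List Bool → List Bool
  | [] => []
  | x :: w => (!x) :: w

mutual
  def bFun : List Bool → List Bool
    | [] => []
    | false :: w => false :: aFun w
    | true :: w => true :: cFun w
  def cFun : List Bool → List Bool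
    | [] => []
    | false :: w => false :: aFun w
    | true :: w => true :: dFun w
  def dFun : List Bool → List Bool
    | [] => []
    | false :: w => false :: w
    | true :: w => true :: bFun w
end

theorem aFun_involutive : Function.Involutive aFun := by
  intro w
  match w with
  | [] => rfl
  | x :: w => simp [aFun]

theorem bcd_involutive :
    ∀ w : List Bool, bFun (bFun w) = w ∧ cFun (cFun w) = w ∧ dFun (dFun w) = w := by
  intro w
  induction w with
  | nil => exact ⟨rfl, rfl, rfl⟩
  | cons x w ih =>
    rcases x with _ | _
    · simp [bFun, cFun, dFun, aFun_involutive w]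
    · simp [bFun, cFun, dFun, ih.1, ih.2.1, ih.2.2]

theorem bFun_involutive : Function.Involutive bFun := fun w => (bcd_involutive w).1
theorem cFun_involutive : Function.Involutive cFun := fun w => (bcd_involutive w).2.1
theorem dFun_involutive : Function.Involutive dFun := fun w => (bcd_involutive w).2.2

theorem aFun_length : ∀ w : List Bool, (aFun w).length = w.length := by
  intro w
  match w with
  | [] => rfl
  | x :: w => simp [aFun]

theorem bcd_length : ∀ w : List Bool,
    (bFun w).length = w.length ∧ (cFun w).length = w.length ∧ (dFun w).length = w.length := by
  intro w
  induction w with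
  | nil => exact ⟨rfl, rfl, rfl⟩
  | cons x w ih =>
    rcases x with _ | _
    · simp [bFun, cFun, dFun, aFun_length w]
    · simp [bFun, cFun, dFun, ih.1, ih.2.1, ih.2.2]

theorem bFun_length : ∀ w, (bFun w).length = w.length := fun w => (bcd_length w).1
theorem cFun_length : ∀ w, (cFun w).length = w.length := fun w => (bcd_length w).2.1
theorem dFun_length : ∀ w, (dFun w).length = w.length := fun w => (bcd_length w).2.2

/-- The generators of the first Grigorchuk group as permutations of the vertex set
`{0,1}*` of the rooted binary tree. -/
def aPerm : Equiv.Perm (List Bool) := aFun_involutive.toPerm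
def bPerm : Equiv.Perm (List Bool) := bFun_involutive.toPerm
def cPerm : Equiv.Perm (List Bool) := cFun_involutive.toPerm
def dPerm : Equiv.Perm (List Bool) := dFun_involutive.toPerm

/-- The generating set `S = {a, b, c, d}` (a set of involutions). -/
def Sset : Set (Equiv.Perm (List Bool)) := {aPerm, bPerm, cPerm, dPerm}

/-- The first Grigorchuk group. -/
def Grigorchuk : Subgroup (Equiv.Perm (List Bool)) := Subgroup.closure Sset

/-- Word length with respect to `S = {a, b, c, d}`. -/
def wordLength (g : Equiv.Perm (List Bool)) : ℕ :=
  sInf {k | ∃ l : List (Equiv.Perm (List Bool)),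
    (∀ x ∈ l, x ∈ Sset) ∧ l.length = k ∧ l.prod = g}

/-- The growth function of the first Grigorchuk group with respect to `S`. -/
def growthGrig (m : ℕ) : ℕ :=
  Nat.card {g : Equiv.Perm (List Bool) |
    ∃ l : List (Equiv.Perm (List Bool)), (∀ x ∈ l, x ∈ Sset) ∧ l.length ≤ m ∧ l.prod = g}

/-! ### Level transfer -/

def levelFun (n : ℕ) (f : List Bool → List Bool) (v : Fin n → Bool) : Fin n → Bool :=
  fun i => (f (List.ofFn v)).getD i false

theorem levelFun_involutive (n : ℕ) (f : List Bool → List Bool)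
    (hlen : ∀ l, (f l).length = l.length) (hinv : Function.Involutive f) :
    Function.Involutive (levelFun n f) := by
  intro v
  have key : ∀ u : Fin n → Bool, List.ofFn (levelFun n f u) = f (List.ofFn u) := by
    intro u
    apply List.ext_getElem
    · simp [hlen]
    · intro i h1 h2
      simp only [List.getElem_ofFn]
      simp [levelFun, List.getD_eq_getElem, h2]
  funext i
  simp only [levelFun, key v, hinv (List.ofFn v)]
  simp [List.getD_eq_getElem]

/-- The images `a_n, b_n, c_n, d_n` of the Grigorchuk generators in `Sym(X_n)`,
where the `n`-th level `X_n = {0,1}^n` is identified with `Fin n → Bool`. -/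
def aLev (n : ℕ) : Equiv.Perm (Fin n → Bool) :=
  (levelFun_involutive n aFun aFun_length aFun_involutive).toPerm
def bLev (n : ℕ) : Equiv.Perm (Fin n → Bool) :=
  (levelFun_involutive n bFun bFun_length bFun_involutive).toPerm
def cLev (n : ℕ) : Equiv.Perm (Fin n → Bool) :=
  (levelFun_involutive n cFun cFun_length cFun_involutive).toPerm
def dLev (n : ℕ) : Equiv.Perm (Fin n → Bool) :=
  (levelFun_involutive n dFun dFun_length dFun_involutive).toPerm

end Grig

/-! ### The space `C_{Y_n}` and the generating set `T_n` -/

namespace TV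

/-- The `n`-th level `X_n = {0,1}^n` of the binary tree. -/
abbrev XL (n : ℕ) : Type := Fin n → Bool

/-- `C_{Y_n} = C × Y_n` with `Y_n = X_n × {1,2,3,4}`; the sheets are indexed by `Fin 4`. -/
abbrev Mn (n : ℕ) : Type := Cantor × (XL n × Fin 4)

/-- `ρ_n = 1^n`. -/
def rhoL (n : ℕ) : XL n := fun _ => true
/-- `η_n = 1^{n-1}0`. -/
def etaL (n : ℕ) : XL n := fun i => decide ((i : ℕ) < n - 1)
/-- `θ_n = 01^{n-1}`. -/
def thetaL (n : ℕ) : XL n := fun i => decide (0 < (i : ℕ))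

/-- A type 1 generator: an element of `S_n` acting diagonally on the four sheets. -/
def type1Gen (n : ℕ) (s : Equiv.Perm (XL n)) : Mn n ≃ₜ Mn n :=
  basePermHomeo (s.prodCongr (Equiv.refl (Fin 4)))

/-- The set of type 1 generators (the truncated Grigorchuk generators). -/
def Type1Set (n : ℕ) : Set (Mn n ≃ₜ Mn n) :=
  {type1Gen n (Grig.aLev n), type1Gen n (Grig.bLev n),
   type1Gen n (Grig.cLev n), type1Gen n (Grig.dLev n)}

/-- A type 2 generator: an element of `Sym(4)_{η_n}`. -/
def type2Gen (n : ℕ) (π : Equiv.Perm (Fin 4)) : Mn n ≃ₜ Mn n :=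
  basePermHomeo (Equiv.prodCongrRight fun x : XL n =>
    if x = etaL n then π else Equiv.refl (Fin 4))

/-- The copy `Sym(4)_{η_n}` of the symmetric group over `η_n` (type 2 generators). -/
def Type2Set (n : ℕ) : Set (Mn n ≃ₜ Mn n) := Set.range (type2Gen n)

/-- The linking transposition `τ_n` (type 3), exchanging the first sheets over
`ρ_n` and `θ_n`. -/
def tauN (n : ℕ) : Mn n ≃ₜ Mn n :=
  basePermHomeo (Equiv.swap (rhoL n, (0 : Fin 4)) (thetaL n, (0 : Fin 4)))

/-- `X₁^{(n)}`: the copy of `X₀` supported on the fourth sheet over `ρ_n` (type 4). -/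
def X1n (n : ℕ) : Mn n ≃ₜ Mn n :=
  fiberedHomeo fun y : XL n × Fin 4 =>
    if y = (rhoL n, (3 : Fin 4)) then X0c else Homeomorph.refl Cantor

/-! The homeomorphism of `C × {1,2,3,4}` acting as `X₀` on `D = C_2 ⊔ C_3` (sheets `1`, `2`
in the `Fin 4` indexing) under the identification `(ξ, i) ↦ (i-2)ξ`, and trivial elsewhere. -/

def x0dSheet (i : Fin 4) (b0 : Bool) : Fin 4 :=
  if i = 1 then (if b0 = false then 1 else 2) else i

def x0dCore (i : Fin 4) (n : ℕ) (b0 w v u : Bool) : Bool :=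
  if i = 1 then (if b0 = false then u else if n = 0 then false else v)
  else if i = 2 then (if n = 0 then true else w)
  else v

def x0dSheetInv (i : Fin 4) (b0 : Bool) : Fin 4 :=
  if i = 2 then (if b0 = false then 1 else 2) else i

def x0dCoreInv (i : Fin 4) (n : ℕ) (b0 w v u : Bool) : Bool :=
  if i = 1 then (if n = 0 then false else w)
  else if i = 2 then (if b0 = false then (if n = 0 then true else v) else u)
  else v

def x0dFun (p : Cantor × Fin 4) : Cantor × Fin 4 :=
  ((fun n => x0dCore p.2 n (p.1 0) (p.1 (n - 1)) (p.1 n) (p.1 (n + 1))),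
    x0dSheet p.2 (p.1 0))

def x0dInvFun (p : Cantor × Fin 4) : Cantor × Fin 4 :=
  ((fun n => x0dCoreInv p.2 n (p.1 0) (p.1 (n - 1)) (p.1 n) (p.1 (n + 1))),
    x0dSheetInv p.2 (p.1 0))

theorem x0d_left_inv : Function.LeftInverse x0dInvFun x0dFun := by
  rintro ⟨ξ, i⟩
  rcases hb0 : ξ 0 with _ | _ <;> fin_cases i <;>
    refine Prod.ext (funext fun n => ?_) ?_ <;>
    first
      | (rcases n with _ | n <;>
          simp [x0dFun, x0dInvFun, x0dCore, x0dCoreInv, x0dSheet, x0dSheetInv, hb0])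
      | simp [x0dFun, x0dInvFun, x0dCore, x0dCoreInv, x0dSheet, x0dSheetInv, hb0]

theorem x0d_right_inv : Function.RightInverse x0dInvFun x0dFun := by
  rintro ⟨ξ, i⟩
  rcases hb0 : ξ 0 with _ | _ <;> fin_cases i <;>
    refine Prod.ext (funext fun n => ?_) ?_ <;>
    first
      | (rcases n with _ | n <;>
          simp [x0dFun, x0dInvFun, x0dCore, x0dCoreInv, x0dSheet, x0dSheetInv, hb0])
      | simp [x0dFun, x0dInvFun, x0dCore, x0dCoreInv, x0dSheet, x0dSheetInv, hb0]

theorem x0dFun_continuous : Continuous x0dFun := by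
  have h : Continuous fun p : Cantor × Fin 4 => x0dFun (p.1, p.2) := by
    refine cont_fibered (Z := Cantor × Fin 4) (fun ξ i => x0dFun (ξ, i)) fun i => ?_
    refine Continuous.prodMk ?_ ?_
    · exact cantor_core_continuous fun n b0 _ _ w v u => x0dCore i n b0 w v u
    · exact Continuous.comp
        (continuous_of_discreteTopology (α := Bool) (f := x0dSheet i)) (continuous_apply 0)
  simpa using h

theorem x0dInvFun_continuous : Continuous x0dInvFun := by
  have h : Continuous fun p : Cantor × Fin 4 => x0dInvFun (p.1, p.2) := by
    refine cont_fibered (Z := Cantor × Fin 4) (fun ξ i => x0dInvFun (ξ, i)) fun i => ?_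
    refine Continuous.prodMk ?_ ?_
    · exact cantor_core_continuous fun n b0 _ _ w v u => x0dCoreInv i n b0 w v u
    · exact Continuous.comp
        (continuous_of_discreteTopology (α := Bool) (f := x0dSheetInv i)) (continuous_apply 0)
  simpa using h

def X0D : (Cantor × Fin 4) ≃ₜ (Cantor × Fin 4) where
  toEquiv := ⟨x0dFun, x0dInvFun, x0d_left_inv, x0d_right_inv⟩
  continuous_toFun := x0dFun_continuous
  continuous_invFun := x0dInvFun_continuous

/-- Reshuffling `C × (X_n × {1,…,4}) ≃ₜ (C × {1,…,4}) × X_n`. -/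
def reshuffle (n : ℕ) : Mn n ≃ₜ (Cantor × Fin 4) × XL n :=
  ((Homeomorph.refl Cantor).prodCongr (Homeomorph.prodComm (XL n) (Fin 4))).trans
    (Homeomorph.prodAssoc Cantor (Fin 4) (XL n)).symm

/-- `X₀^{(n)}`: acting as `X₀` on `D_n = C_{(ρ_n,2)} ⊔ C_{(ρ_n,3)}` (type 4). -/
def X0n (n : ℕ) : Mn n ≃ₜ Mn n :=
  (reshuffle n).trans ((fiberedHomeo fun x : XL n =>
    if x = rhoL n then X0D else Homeomorph.refl (Cantor × Fin 4)).trans (reshuffle n).symm)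

/-- The type 4 generators. -/
def Type4Set (n : ℕ) : Set (Mn n ≃ₜ Mn n) := {X0n n, X1n n}

/-- The generating set `T_n`. -/
def TnSet (n : ℕ) : Set (Mn n ≃ₜ Mn n) :=
  Type1Set n ∪ Type2Set n ∪ {tauN n} ∪ Type4Set n

/-- The group `W_n = ⟨T_n⟩`. -/
def Wn (n : ℕ) : Subgroup (Mn n ≃ₜ Mn n) := Subgroup.closure (TnSet n)

/-- The generators of types `2`, `3` and `4`. -/
def typeSet (n : ℕ) : ℕ → Set (Mn n ≃ₜ Mn n)
  | 2 => Type2Set n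
  | 3 => {tauN n}
  | 4 => Type4Set n
  | _ => ∅

end TV

end
/-! ### The identification of the four sheets over `ρ_n` with the Cantor set -/

namespace TV

def quadIdx : Bool → Bool → Fin 4
  | false, false => 0
  | false, true => 1
  | true, false => 2
  | true, true => 3

def quadHi (i : Fin 4) : Bool := decide (2 ≤ (i : ℕ))
def quadLo (i : Fin 4) : Bool := decide ((i : ℕ) % 2 = 1)

/-- The identification of `C × {1,2,3,4}` with `C`, concatenating the four copies in the
order of the index. -/
def quadHomeo : (Cantor × Fin 4) ≃ₜ Cantor where
  toEquiv := ⟨fun p => consC (quadHi p.2) (consC (quadLo p.2) p.1),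
    fun ξ => (shiftC (shiftC ξ), quadIdx (ξ 0) (ξ 1)),
    by
      rintro ⟨ξ, i⟩
      refine Prod.ext (funext fun n => rfl) ?_
      fin_cases i <;> simp [quadHi, quadLo, quadIdx, consC, shiftC],
    by
      intro ξ
      rcases hb0 : ξ 0 with _ | _ <;> rcases hb1 : ξ 1 with _ | _ <;>
        funext n <;> rcases n with _ | _ | n <;>
        simp [consC, shiftC, quadIdx, quadHi, quadLo, hb0, hb1] <;> try decide⟩
  continuous_toFun := by
    have h : Continuous fun p : Cantor × Fin 4 =>
        (fun ξ i => consC (quadHi i) (consC (quadLo i) ξ)) p.1 p.2 :=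
      cont_fibered (Z := Cantor) _ fun i =>
        (consC_continuous (quadHi i)).comp (consC_continuous (quadLo i))
    exact h
  continuous_invFun := by
    refine Continuous.prodMk (shiftC_continuous.comp shiftC_continuous) ?_
    have h : Continuous (fun p : Bool × Bool => quadIdx p.1 p.2) :=
      continuous_of_discreteTopology
    have h2 : Continuous fun ξ : Cantor => (ξ 0, ξ 1) :=
      (continuous_apply 0).prodMk (continuous_apply 1)
    exact h.comp h2

/-- The copy of a homeomorphism `f` of the Cantor set supported on the union of the four
sheets over `ρ_n`, via the identification of this union with the Cantor set. -/
def liftRho (n : ℕ) (f : Cantor ≃ₜ Cantor) : Mn n ≃ₜ Mn n :=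
  (reshuffle n).trans ((fiberedHomeo fun x : XL n =>
    if x = rhoL n then quadHomeo.trans (f.trans quadHomeo.symm)
    else Homeomorph.refl (Cantor × Fin 4)).trans (reshuffle n).symm)

end TV

/-- Thompson's group `F` as a group of homeomorphisms of the Cantor set, generated by the
standard generators `X₀` and `X₁`. -/
def ThompsonF : Subgroup (Cantor ≃ₜ Cantor) := Subgroup.closure {X0c, X1c}

/-! ### Auxiliary development for the proof -/

noncomputable section RistProof

open TV

/-! #### Words in the Grigorchuk generators flipping the last letter of `1^{n-1}0` -/

inductive GGen | A | B | C | D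

open GGen in
/-- Evaluation of an abstract generator on the tree. -/
def gev : GGen → List Bool → List Bool
  | A => Grig.aFun
  | B => Grig.bFun
  | C => Grig.cFun
  | D => Grig.dFun

open GGen in
/-- A word whose section at the vertex `1` is the given generator. -/
def glift : GGen → List GGen
  | A => [A, B, A]
  | B => [D]
  | C => [B]
  | D => [C]

/-- Evaluation of a word (leftmost letter acts last). -/
def gevL : List GGen → List Bool → List Bool
  | [], w => w
  | g :: l, w => gev g (gevL l w)

theorem gevL_append (l1 l2 : List GGen) (w : List Bool) :
    gevL (l1 ++ l2) w = gevL l1 (gevL l2 w) := by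
  induction l1 with
  | nil => rfl
  | cons g l ih => simp [gevL, ih]

theorem glift_spec (g : GGen) (w : List Bool) :
    gevL (glift g) (true :: w) = true :: gev g w := by
  cases g <;>
    simp [glift, gevL, gev, Grig.aFun, Grig.bFun, Grig.cFun, Grig.dFun]

def liftL (l : List GGen) : List GGen := (l.map glift).flatten

theorem liftL_spec (l : List GGen) (w : List Bool) :
    gevL (liftL l) (true :: w) = true :: gevL l w := by
  induction l with
  | nil => rfl
  | cons g l ih =>
    simp only [liftL, List.map_cons, List.flatten_cons]
    rw [gevL_append]
    show gevL (glift g) (gevL (liftL l) (true :: w)) = _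
    rw [ih, glift_spec]
    rfl

/-- The word `w_{k+1}` mapping `1^k 0` to `1^{k+1}`. -/
def wordW : ℕ → List GGen
  | 0 => [GGen.A]
  | k+1 => liftL (wordW k)

theorem wordW_spec (k : ℕ) :
    gevL (wordW k) (List.replicate k true ++ [false]) = List.replicate (k+1) true := by
  induction k with
  | zero => rfl
  | succ k ih =>
    show gevL (liftL (wordW k)) (List.replicate (k+1) true ++ [false]) = _
    rw [List.replicate_succ, List.cons_append, liftL_spec, ih, ← List.replicate_succ]

/-! #### Transfer to the level-`n` permutations -/

theorem ofFn_levelFun {n : ℕ} (f : List Bool → List Bool)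
    (hlen : ∀ l, (f l).length = l.length) (v : Fin n → Bool) :
    List.ofFn (Grig.levelFun n f v) = f (List.ofFn v) := by
  apply List.ext_getElem
  · simp [hlen]
  · intro i h1 h2
    simp only [List.getElem_ofFn]
    simp [Grig.levelFun, List.getD_eq_getElem, h2]

open GGen in
/-- The level-`n` permutation corresponding to an abstract generator. -/
def gPerm (n : ℕ) : GGen → Equiv.Perm (Fin n → Bool)
  | A => Grig.aLev n
  | B => Grig.bLev n
  | C => Grig.cLev n
  | D => Grig.dLev n

theorem gPerm_apply (n : ℕ) (g : GGen) (v : Fin n → Bool) :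
    List.ofFn (gPerm n g v) = gev g (List.ofFn v) := by
  cases g
  · exact (by simpa [gPerm, gev, Grig.aLev, Function.Involutive.coe_toPerm] using
      ofFn_levelFun Grig.aFun Grig.aFun_length v)
  · exact (by simpa [gPerm, gev, Grig.bLev, Function.Involutive.coe_toPerm] using
      ofFn_levelFun Grig.bFun Grig.bFun_length v)
  · exact (by simpa [gPerm, gev, Grig.cLev, Function.Involutive.coe_toPerm] using
      ofFn_levelFun Grig.cFun Grig.cFun_length v)
  · exact (by simpa [gPerm, gev, Grig.dLev, Function.Involutive.coe_toPerm] using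
      ofFn_levelFun Grig.dFun Grig.dFun_length v)

theorem gPermL_apply (n : ℕ) (l : List GGen) (v : Fin n → Bool) :
    List.ofFn (((l.map (gPerm n)).prod) v) = gevL l (List.ofFn v) := by
  induction l with
  | nil => rfl
  | cons g l ih =>
    rw [List.map_cons, List.prod_cons, Equiv.Perm.mul_apply, gPerm_apply, ih]
    rfl

theorem ofFn_rhoL (n : ℕ) : List.ofFn (rhoL n) = List.replicate n true :=
  List.ofFn_const n true

theorem ofFn_etaL (n : ℕ) (hn : 1 ≤ n) :
    List.ofFn (etaL n) = List.replicate (n-1) true ++ [false] := by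
  apply List.ext_getElem
  · simp; omega
  · intro i h1 h2
    simp only [List.getElem_ofFn, etaL]
    rcases lt_or_ge i (n-1) with h | h
    · rw [List.getElem_append_left (by simpa using h)]
      simp [h]
    · have hi : i = n - 1 := by simp at h1; omega
      subst hi
      rw [List.getElem_append_right (by simp)]
      simp

theorem exists_grig_word (n : ℕ) (hn : 1 ≤ n) :
    ∃ l : List GGen, ((l.map (gPerm n)).prod) (etaL n) = rhoL n := by
  refine ⟨wordW (n-1), ?_⟩
  apply List.ofFn_injective
  rw [gPermL_apply, ofFn_etaL n hn, ofFn_rhoL, wordW_spec]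
  congr 1
  omega

/-! #### Pointwise `rfl` lemmas for the homeomorphisms -/

@[simp] theorem homeo_mul_apply {X : Type*} [TopologicalSpace X] (f g : X ≃ₜ X) (x : X) :
    (f * g) x = f (g x) := rfl

@[simp] theorem fiberedHomeo_apply {X Y : Type*} [TopologicalSpace X] [TopologicalSpace Y]
    [DiscreteTopology Y] (F : Y → X ≃ₜ X) (p : X × Y) :
    fiberedHomeo F p = (F p.2 p.1, p.2) := rfl

@[simp] theorem basePermHomeo_apply {X Y : Type*} [TopologicalSpace X] [TopologicalSpace Y]
    [DiscreteTopology Y] (e : Equiv.Perm Y) (p : X × Y) :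
    basePermHomeo (X := X) e p = (p.1, e p.2) := rfl

@[simp] theorem basePermHomeo_inv_apply {X Y : Type*} [TopologicalSpace X] [TopologicalSpace Y]
    [DiscreteTopology Y] (e : Equiv.Perm Y) (p : X × Y) :
    (basePermHomeo (X := X) e)⁻¹ p = (p.1, e.symm p.2) := rfl

@[simp] theorem basePermHomeo_symm_apply' {X Y : Type*} [TopologicalSpace X] [TopologicalSpace Y]
    [DiscreteTopology Y] (e : Equiv.Perm Y) (p : X × Y) :
    (basePermHomeo (X := X) e).symm p = (p.1, e.symm p.2) := rfl

@[simp] theorem consC_zero (b : Bool) (ξ : Cantor) : consC b ξ 0 = b := rfl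
@[simp] theorem consC_succ (b : Bool) (ξ : Cantor) (n : ℕ) : consC b ξ (n+1) = ξ n := rfl
@[simp] theorem shiftC_apply (ξ : Cantor) (n : ℕ) : shiftC ξ n = ξ (n+1) := rfl

theorem quadHomeo_apply (p : Cantor × Fin 4) :
    quadHomeo p = consC (quadHi p.2) (consC (quadLo p.2) p.1) := rfl

theorem quadHomeo_symm_apply (ω : Cantor) :
    quadHomeo.symm ω = (shiftC (shiftC ω), quadIdx (ω 0) (ω 1)) := rfl

theorem X0c_apply (ζ : Cantor) : X0c ζ = x0fun ζ := rfl

theorem X1c_apply (ζ : Cantor) :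
    X1c ζ = consC (ζ 0) ((if ζ 0 = true then X0c else Homeomorph.refl Cantor) (shiftC ζ)) := rfl

theorem X0D_apply (p : Cantor × Fin 4) : X0D p = x0dFun p := rfl

/-! #### The conjugating homomorphisms -/

/-- Conjugation by the quad identification. -/
def quadConjHom : (Cantor ≃ₜ Cantor) →* ((Cantor × Fin 4) ≃ₜ (Cantor × Fin 4)) where
  toFun f := quadHomeo.trans (f.trans quadHomeo.symm)
  map_one' := Homeomorph.ext fun p => quadHomeo.symm_apply_apply p
  map_mul' f g := Homeomorph.ext fun p => by
    show quadHomeo.symm (f (g (quadHomeo p))) =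
      quadHomeo.symm (f (quadHomeo (quadHomeo.symm (g (quadHomeo p)))))
    rw [quadHomeo.apply_symm_apply]

/-- The copy of a quad homeomorphism over `ρ_n`. -/
def phiRhoF (n : ℕ) (q : (Cantor × Fin 4) ≃ₜ (Cantor × Fin 4)) : Mn n ≃ₜ Mn n :=
  (reshuffle n).trans ((fiberedHomeo fun x : XL n =>
    if x = rhoL n then q else Homeomorph.refl (Cantor × Fin 4)).trans (reshuffle n).symm)

theorem phiRhoF_apply (n : ℕ) (q : (Cantor × Fin 4) ≃ₜ (Cantor × Fin 4))
    (ξ : Cantor) (x : XL n) (i : Fin 4) :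
    phiRhoF n q (ξ, (x, i)) =
      (((if x = rhoL n then q else Homeomorph.refl _) (ξ, i)).1,
        (x, ((if x = rhoL n then q else Homeomorph.refl _) (ξ, i)).2)) := rfl

theorem phiRhoF_apply_pos {n : ℕ} {q : (Cantor × Fin 4) ≃ₜ (Cantor × Fin 4)}
    {ξ : Cantor} {x : XL n} {i : Fin 4} (h : x = rhoL n) :
    phiRhoF n q (ξ, (x, i)) = ((q (ξ, i)).1, (x, (q (ξ, i)).2)) := by
  rw [phiRhoF_apply, if_pos h]

theorem phiRhoF_apply_neg {n : ℕ} {q : (Cantor × Fin 4) ≃ₜ (Cantor × Fin 4)}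
    {ξ : Cantor} {x : XL n} {i : Fin 4} (h : ¬ x = rhoL n) :
    phiRhoF n q (ξ, (x, i)) = (ξ, (x, i)) := by
  rw [phiRhoF_apply, if_neg h]; rfl

/-- `phiRhoF` as a homomorphism. -/
def phiRhoHom (n : ℕ) : ((Cantor × Fin 4) ≃ₜ (Cantor × Fin 4)) →* (Mn n ≃ₜ Mn n) where
  toFun := phiRhoF n
  map_one' := Homeomorph.ext <| by
    rintro ⟨ξ, x, i⟩
    by_cases h : x = rhoL n
    · rw [phiRhoF_apply_pos h]; rfl
    · rw [phiRhoF_apply_neg h]; rfl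
  map_mul' q1 q2 := Homeomorph.ext <| by
    rintro ⟨ξ, x, i⟩
    show phiRhoF n (q1 * q2) (ξ, (x, i)) = phiRhoF n q1 (phiRhoF n q2 (ξ, (x, i)))
    by_cases h : x = rhoL n
    · rw [phiRhoF_apply_pos h, phiRhoF_apply_pos h, phiRhoF_apply_pos h]
      simp
    · rw [phiRhoF_apply_neg h, phiRhoF_apply_neg h, phiRhoF_apply_neg h]

/-! #### Sheet permutations over `ρ_n` belong to `W_n` -/

/-- `type1Gen` as a homomorphism. -/
def type1Hom (n : ℕ) : Equiv.Perm (XL n) →* (Mn n ≃ₜ Mn n) where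
  toFun := type1Gen n
  map_one' := Homeomorph.ext fun _ => rfl
  map_mul' _ _ := Homeomorph.ext fun _ => rfl

theorem conj_type2 (n : ℕ) (s : Equiv.Perm (XL n)) (hs : s (etaL n) = rhoL n)
    (π : Equiv.Perm (Fin 4)) :
    phiRhoF n (basePermHomeo π) = type1Gen n s * type2Gen n π * (type1Gen n s)⁻¹ := by
  apply Homeomorph.ext
  rintro ⟨ξ, x, i⟩
  have hrhs : (type1Gen n s * type2Gen n π * (type1Gen n s)⁻¹) (ξ, (x, i)) =
      (ξ, (s (s.symm x), (if s.symm x = etaL n then π else Equiv.refl (Fin 4)) i)) := rfl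
  rw [hrhs, Equiv.apply_symm_apply]
  by_cases h : x = rhoL n
  · rw [phiRhoF_apply_pos h, if_pos (by rw [h, ← hs, Equiv.symm_apply_apply])]
    rfl
  · rw [phiRhoF_apply_neg h,
      if_neg (fun hc => h (by rw [← hs, ← hc, Equiv.apply_symm_apply]))]
    rfl

theorem type1Gen_mem (n : ℕ) (g : GGen) : type1Gen n (gPerm n g) ∈ Wn n := by
  apply Subgroup.subset_closure
  refine Or.inl (Or.inl (Or.inl ?_))
  cases g
  · exact Or.inl rfl
  · exact Or.inr (Or.inl rfl)
  · exact Or.inr (Or.inr (Or.inl rfl))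
  · exact Or.inr (Or.inr (Or.inr rfl))

theorem sheetPerm_mem (n : ℕ) (hn : 1 ≤ n) (π : Equiv.Perm (Fin 4)) :
    phiRhoF n (basePermHomeo π) ∈ Wn n := by
  obtain ⟨l, hl⟩ := exists_grig_word n hn
  have hG : type1Gen n ((l.map (gPerm n)).prod) ∈ Wn n := by
    have : type1Gen n ((l.map (gPerm n)).prod) =
        ((l.map (gPerm n)).map (type1Hom n)).prod := map_list_prod (type1Hom n) _
    rw [this, List.map_map]
    apply Subgroup.list_prod_mem
    intro x hx
    obtain ⟨g, _, rfl⟩ := List.mem_map.1 hx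
    exact type1Gen_mem n g
  rw [conj_type2 n _ hl π]
  have ht2 : type2Gen n π ∈ Wn n :=
    Subgroup.subset_closure (Or.inl (Or.inl (Or.inr ⟨π, rfl⟩)))
  exact mul_mem (mul_mem hG ht2) (inv_mem hG)

theorem X0n_mem (n : ℕ) : X0n n ∈ Wn n :=
  Subgroup.subset_closure (Or.inr (Or.inl rfl))

theorem X0n_eq_phi (n : ℕ) : X0n n = phiRhoF n X0D := rfl

/-! #### The quad-level identities for the Thompson generators -/

/-- The `3`-cycle `1 ↦ 2 ↦ 3 ↦ 1` of the sheets. -/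
def s3 : Equiv.Perm (Fin 4) := Equiv.swap 1 2 * Equiv.swap 2 3

/-- The `3`-cycle `0 ↦ 2 ↦ 1 ↦ 0` of the sheets. -/
def t3 : Equiv.Perm (Fin 4) := Equiv.swap 1 2 * Equiv.swap 0 1

@[simp] theorem finval_0 : ((0 : Fin 4) : ℕ) = 0 := rfl
@[simp] theorem finval_1 : ((1 : Fin 4) : ℕ) = 1 := rfl
@[simp] theorem finval_2 : ((2 : Fin 4) : ℕ) = 2 := rfl
@[simp] theorem finval_3 : ((3 : Fin 4) : ℕ) = 3 := rfl

@[simp] theorem s3_a0 : s3 0 = 0 := by decide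
@[simp] theorem s3_a1 : s3 1 = 2 := by decide
@[simp] theorem s3_a2 : s3 2 = 3 := by decide
@[simp] theorem s3_a3 : s3 3 = 1 := by decide
@[simp] theorem s3_s0 : s3.symm 0 = 0 := by decide
@[simp] theorem s3_s1 : s3.symm 1 = 3 := by decide
@[simp] theorem s3_s2 : s3.symm 2 = 1 := by decide
@[simp] theorem s3_s3 : s3.symm 3 = 2 := by decide
@[simp] theorem t3_a0 : t3 0 = 2 := by decide
@[simp] theorem t3_a1 : t3 1 = 0 := by decide
@[simp] theorem t3_a2 : t3 2 = 1 := by decide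
@[simp] theorem t3_a3 : t3 3 = 3 := by decide
@[simp] theorem t3_s0 : t3.symm 0 = 1 := by decide
@[simp] theorem t3_s1 : t3.symm 1 = 2 := by decide
@[simp] theorem t3_s2 : t3.symm 2 = 0 := by decide
@[simp] theorem t3_s3 : t3.symm 3 = 3 := by decide

set_option maxHeartbeats 1000000 in
theorem QX1 : quadConjHom X1c =
    (basePermHomeo s3 : (Cantor × Fin 4) ≃ₜ (Cantor × Fin 4)) * X0D * (basePermHomeo s3)⁻¹ := by
  apply Homeomorph.ext
  rintro ⟨ξ, i⟩
  show quadHomeo.symm (X1c (quadHomeo (ξ, i))) = _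
  rcases hb0 : ξ 0 with _ | _ <;> fin_cases i <;>
    refine Prod.ext (funext fun m => ?_) ?_ <;>
    first
      | (rcases m with _ | _ | m <;>
          simp [quadHomeo_apply, quadHomeo_symm_apply, X1c_apply, X0c_apply, X0D_apply,
            x0fun, x0core, x0dFun, x0dCore, x0dSheet, quadIdx, quadHi, quadLo,
            hb0])
      | simp [quadHomeo_apply, quadHomeo_symm_apply, X1c_apply, X0c_apply, X0D_apply,
          x0fun, x0core, x0dFun, x0dCore, x0dSheet, quadIdx, quadHi, quadLo,
          hb0]

set_option maxHeartbeats 1000000 in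
theorem QX0 : quadConjHom X0c =
    (basePermHomeo s3 : (Cantor × Fin 4) ≃ₜ (Cantor × Fin 4)) * X0D * (basePermHomeo s3)⁻¹ *
      X0D * ((basePermHomeo t3 : (Cantor × Fin 4) ≃ₜ (Cantor × Fin 4)) * X0D *
        (basePermHomeo t3)⁻¹) := by
  apply Homeomorph.ext
  rintro ⟨ξ, i⟩
  show quadHomeo.symm (X0c (quadHomeo (ξ, i))) = _
  rcases hb0 : ξ 0 with _ | _ <;> fin_cases i <;>
    refine Prod.ext (funext fun m => ?_) ?_ <;>
    first
      | (rcases m with _ | _ | m <;>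
          simp [quadHomeo_apply, quadHomeo_symm_apply, X0c_apply, X0D_apply,
            x0fun, x0core, x0dFun, x0dCore, x0dSheet, quadIdx, quadHi, quadLo,
            hb0])
      | simp [quadHomeo_apply, quadHomeo_symm_apply, X0c_apply, X0D_apply,
          x0fun, x0core, x0dFun, x0dCore, x0dSheet, quadIdx, quadHi, quadLo,
          hb0]

end RistProof

/-- **The copy of Thompson's group `F` over `ρ_n` lies in `W_n`:** for every `n ≥ 1`,
the group `W_n = ⟨T_n⟩` contains the copy
`RiSt_F(C_{(ρ_n,1)} ∪ C_{(ρ_n,2)} ∪ C_{(ρ_n,3)} ∪ C_{(ρ_n,4)})` of Thompson's group `F`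
supported on the union of the four sheets over `ρ_n`, i.e. the image of `F` under the
embedding given by the identification of this union with the Cantor set. -/
theorem ristF_le_Wn (n : ℕ) (hn : 1 ≤ n) (f : Cantor ≃ₜ Cantor) (hf : f ∈ ThompsonF) :
    TV.liftRho n f ∈ TV.Wn n := by
  classical
  -- the generating set at quad level
  set Qgens : Set ((Cantor × Fin 4) ≃ₜ (Cantor × Fin 4)) :=
    insert TV.X0D (Set.range fun σ : Equiv.Perm (Fin 4) =>
      (basePermHomeo σ : (Cantor × Fin 4) ≃ₜ (Cantor × Fin 4))) with hQ
  have key : ∀ q ∈ Subgroup.closure Qgens, phiRhoF n q ∈ TV.Wn n := by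
    intro q hq
    induction hq using Subgroup.closure_induction with
    | mem x hx =>
      rcases hx with rfl | ⟨σ, rfl⟩
      · exact X0n_mem n
      · exact sheetPerm_mem n hn σ
    | one => rw [show phiRhoF n 1 = phiRhoHom n 1 from rfl, map_one]; exact one_mem _
    | mul x y hx hy ihx ihy =>
      rw [show phiRhoF n (x * y) = phiRhoHom n (x * y) from rfl, map_mul]
      exact mul_mem ihx ihy
    | inv x hx ihx =>
      rw [show phiRhoF n x⁻¹ = phiRhoHom n x⁻¹ from rfl, map_inv]
      exact inv_mem ihx
  have hmemgen : ∀ σ : Equiv.Perm (Fin 4),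
      (basePermHomeo σ : (Cantor × Fin 4) ≃ₜ (Cantor × Fin 4)) ∈ Subgroup.closure Qgens :=
    fun σ => Subgroup.subset_closure (Or.inr ⟨σ, rfl⟩)
  have hX0D : TV.X0D ∈ Subgroup.closure Qgens := Subgroup.subset_closure (Or.inl rfl)
  have hquad : quadConjHom f ∈ Subgroup.closure Qgens := by
    clear key
    induction hf using Subgroup.closure_induction with
    | mem x hx =>
      rcases hx with rfl | rfl
      · rw [show quadConjHom X0c = _ from QX0]
        exact mul_mem (mul_mem (mul_mem (mul_mem (hmemgen s3) hX0D) (inv_mem (hmemgen s3)))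
          hX0D) (mul_mem (mul_mem (hmemgen t3) hX0D) (inv_mem (hmemgen t3)))
      · rw [show quadConjHom X1c = _ from QX1]
        exact mul_mem (mul_mem (hmemgen s3) hX0D) (inv_mem (hmemgen s3))
    | one => rw [map_one]; exact one_mem _
    | mul x y hx hy ihx ihy => rw [map_mul]; exact mul_mem ihx ihy
    | inv x hx ihx => rw [map_inv]; exact inv_mem ihx
  have : TV.liftRho n f = phiRhoF n (quadConjHom f) := rfl
  rw [this]
  exact key _ hquad
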